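/- Let P be a probability measure on X, A ⊆ X measurable, and V₁,…,V_L i.i.d. with law P. If p ∈ [0,1] and λ > 0 satisfy p ≤ λ·P(A) and p·(L/λ)/L ≤ 1, then P[∩_{l=1}^{L} {V_l ∉ A}] = (1 − P(A))^L ≤ 1 − p + exp(−L/λ). -/

import Mathlib

open MeasureTheory

/-- Steps (47)–(48): if `V₁,…,V_L` are i.i.d. with law `P`, `p ∈ [0,1]`, `λ > 0`,
`p ≤ λ P(A)` and `p (L/λ)/L ≤ 1`, then
`P[∩ₗ {Vₗ ∉ A}] = (1 - P(A))^L ≤ 1 - p + e^{-L/λ}`. -/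
theorem covering_probability_bound
    {Ω X : Type*} [MeasurableSpace Ω] [MeasurableSpace X]
    (Pr : Measure Ω) [IsProbabilityMeasure Pr]
    (μ : Measure X) [IsProbabilityMeasure μ]
    (L : ℕ) (V : Fin L → Ω → X) (hV : ∀ l, Measurable (V l))
    (hlaw : Pr.map (fun ω => fun l => V l ω) = Measure.pi (fun _ : Fin L => μ))
    (A : Set X) (hA : MeasurableSet A)
    (p lam : ℝ) (hp0 : 0 ≤ p) (hp1 : p ≤ 1) (hlam : 0 < lam)
    (hpA : p ≤ lam * (μ A).toReal)
    (hnorm : p * ((L : ℝ) / lam) / (L : ℝ) ≤ 1) :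
    (Pr {ω | ∀ l, V l ω ∉ A}).toReal = (1 - (μ A).toReal) ^ L ∧
    (1 - (μ A).toReal) ^ L ≤ 1 - p + Real.exp (-(L : ℝ) / lam) := by
  set t : ℝ := (μ A).toReal with ht
  have ht0 : 0 ≤ t := ENNReal.toReal_nonneg
  have ht1 : t ≤ 1 := by
    have h := prob_le_one (μ := μ) (s := A)
    have := ENNReal.toReal_mono (by simp) h
    simpa using this
  constructor
  · -- the probability computation
    have hmeas : Measurable (fun ω => fun l => V l ω) :=
      measurable_pi_lambda _ hV
    have hset : MeasurableSet (Set.univ.pi (fun _ : Fin L => Aᶜ)) :=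
      MeasurableSet.univ_pi (fun _ => hA.compl)
    have hpre : {ω | ∀ l, V l ω ∉ A}
        = (fun ω => fun l => V l ω) ⁻¹' (Set.univ.pi (fun _ : Fin L => Aᶜ)) := by
      ext ω; simp [Set.mem_pi]
    have h1 : Pr {ω | ∀ l, V l ω ∉ A}
        = Measure.pi (fun _ : Fin L => μ) (Set.univ.pi (fun _ : Fin L => Aᶜ)) := by
      rw [hpre, ← Measure.map_apply hmeas hset, hlaw]
    rw [h1, Measure.pi_pi]
    have hcompl : μ Aᶜ = 1 - μ A := prob_compl_eq_one_sub hA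
    rw [Finset.prod_const, hcompl]
    rw [ENNReal.toReal_pow, ENNReal.toReal_sub_of_le (prob_le_one) (by simp)]
    simp [Finset.card_univ, ht]
  · -- the analytic inequality
    have hplam : p / lam ≤ t := (div_le_iff₀' hlam).2 hpA
    have h1 : (1 - t) ^ L ≤ (1 - p / lam) ^ L := by
      apply pow_le_pow_left₀ (by linarith) (by linarith)
    have h2 : (1 - p / lam) ^ L ≤ Real.exp (-(p / lam)) ^ L := by
      apply pow_le_pow_left₀ (by linarith)
      linarith [Real.add_one_le_exp (-(p / lam))]
    have h3 : Real.exp (-(p / lam)) ^ L = Real.exp (p * (-((L : ℝ) / lam))) := by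
      rw [← Real.exp_nat_mul]; ring_nf
    set α : ℝ := (L : ℝ) / lam with hα
    have hα0 : 0 ≤ α := div_nonneg (Nat.cast_nonneg L) hlam.le
    have hconv : Real.exp ((1 - p) • (0 : ℝ) + p • (-α))
        ≤ (1 - p) • Real.exp 0 + p • Real.exp (-α) :=
      convexOn_exp.2 (Set.mem_univ 0) (Set.mem_univ (-α)) (by linarith) hp0 (by ring)
    have h4 : Real.exp (p * (-α)) ≤ 1 - p + p * Real.exp (-α) := by
      simpa [smul_eq_mul] using hconv
    have h5 : p * Real.exp (-α) ≤ Real.exp (-α) := by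
      nlinarith [Real.exp_pos (-α)]
    have : Real.exp (-α) = Real.exp (-(L : ℝ) / lam) := by rw [hα]; ring_nf
    calc (1 - t) ^ L ≤ Real.exp (p * (-α)) := by rw [← h3]; exact h1.trans h2
      _ ≤ 1 - p + Real.exp (-(L : ℝ) / lam) := by rw [← this]; linarith
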